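/- Let G=(Σ,R,T) be a prefix-free context-free game and E a set of effect triples such that for each non-trivial t ∈ E there exists a t-inducing strategy automaton. Then there is a regular one-pass strategy σ_A for G (given by a strategy automaton A) such that W_{N_E}(ρ) ≤_sl W_G(σ_A) for every strategy ρ for the online word problem OnlineNFA(N_E). -/

import Mathlib

namespace CFG

/-- Juliet's two kinds of moves. -/
inductive JMove : Type
  | call : JMove
  | read : JMove
deriving DecidableEq

/-- The extended alphabet Σ̂: `Sum.inl a` is the plain symbol `a`,
`Sum.inr a` is the "called" copy `â`. -/
abbrev HSym (A : Type) : Type := A ⊕ A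

/-- The homomorphism ♮ deleting called symbols. -/
def flat {A : Type} (α : List (HSym A)) : List A :=
  α.filterMap (fun x => match x with | Sum.inl a => some a | Sum.inr _ => none)

/-- A context-free game: a (minimal) DFA `T` over `A` with finite state set `Q`,
and a replacement relation `R` with nonempty replacement words and regular
replacement languages. -/
structure CFGame (A : Type) where
  Q : Type
  fintypeQ : Fintype Q
  T : DFA A Q
  minimal_reachable : ∀ q : Q, ∃ w : List A, T.evalFrom T.start w = q
  minimal_distinguishable :
    ∀ q q' : Q, (∀ w : List A, T.evalFrom q w ∈ T.accept ↔ T.evalFrom q' w ∈ T.accept) → q = q'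
  R : A → List A → Prop
  R_ne : ∀ a v, R a v → v ≠ []
  R_regular : ∀ a, Language.IsRegular {v : List A | R a v}

variable {A : Type}

/-- `a` is a function symbol (its replacement language is nonempty). -/
def CFGame.Fn (G : CFGame A) (a : A) : Prop := ∃ v, G.R a v

/-- One-pass strategies of Juliet (values at non-function symbols are irrelevant). -/
abbrev JStrat (A : Type) : Type := List (HSym A) → A → JMove

/-- Strategies of Romeo (values at non-function symbols are irrelevant). -/
abbrev RStrat (A : Type) : Type := List (HSym A) → A → List A

/-- Validity of a Romeo strategy: replacement words belong to the replacement language. -/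
def CFGame.RValid (G : CFGame A) (τ : RStrat A) : Prop :=
  ∀ (α : List (HSym A)) (a : A), G.Fn a → G.R a (τ α a)

/-- Configurations, instrumented for depth bookkeeping: a history string, the
remaining string where every symbol is annotated with its call-nesting level,
and the maximal nesting depth of the `Call` moves played so far. -/
abbrev Config (A : Type) : Type := List (HSym A) × List (A × ℕ) × ℕ

/-- One step of a play: Juliet reads or calls the current symbol according to `σ`
(a call is only possible at a function symbol); a call is answered by `τ`. -/
noncomputable def CFGame.step (G : CFGame A) (σ : JStrat A) (τ : RStrat A) :
    Config A → Config A :=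
  fun c =>
    match c with
    | (α, [], d) => (α, [], d)
    | (α, (a, k) :: v, d) =>
      letI := Classical.propDecidable (G.Fn a ∧ σ α a = JMove.call)
      if G.Fn a ∧ σ α a = JMove.call then
        (α ++ [Sum.inr a], (τ α a).map (fun b => (b, k + 1)) ++ v, max d (k + 1))
      else (α ++ [Sum.inl a], v, d)

/-- The play of `σ` against `τ` on input word `w`, as the sequence of its
configurations (the configuration stays fixed once the remaining string is empty). -/
noncomputable def CFGame.play (G : CFGame A) (σ : JStrat A) (τ : RStrat A)
    (w : List A) (n : ℕ) : Config A :=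
  (G.step σ τ)^[n] ([], w.map (fun a => (a, 0)), 0)

/-- `σ` wins on `w`: against every (valid) Romeo strategy, the play on `w` is
finite and its final string belongs to the target language. -/
def CFGame.WinsOn (G : CFGame A) (σ : JStrat A) (w : List A) : Prop :=
  ∀ τ : RStrat A, G.RValid τ →
    ∃ n : ℕ, (G.play σ τ w n).2.1 = [] ∧
      G.T.evalFrom G.T.start (flat (G.play σ τ w n).1) ∈ G.T.accept

/-- The winning set `W(σ)`. -/
def CFGame.W (G : CFGame A) (σ : JStrat A) : Set (List A) := {w | G.WinsOn σ w}

/-- `σ` is terminating: every play of `σ` is finite. -/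
def CFGame.Terminating (G : CFGame A) (σ : JStrat A) : Prop :=
  ∀ τ : RStrat A, G.RValid τ → ∀ w : List A, ∃ n : ℕ, (G.play σ τ w n).2.1 = []

/-- `σ` is dominant: it dominates every one-pass strategy. -/
def CFGame.Dominant (G : CFGame A) (σ : JStrat A) : Prop :=
  ∀ σ' : JStrat A, G.W σ' ⊆ G.W σ

/-- `σ` is undominated: no one-pass strategy strictly dominates it. -/
def CFGame.Undominated (G : CFGame A) (σ : JStrat A) : Prop :=
  ¬ ∃ σ' : JStrat A, G.W σ ⊂ G.W σ'

/-- `σ` is forgetful: its decisions only depend on `♮α` and the current symbol. -/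
def CFGame.Forgetful (G : CFGame A) (σ : JStrat A) : Prop :=
  ∀ (α β : List (HSym A)) (a : A), G.Fn a → flat α = flat β → σ α a = σ β a

/-- `σ` is regular: the language `{αa : σ(α,a) = Call}` over Σ̂ is regular. -/
def CFGame.RegularStrat (G : CFGame A) (σ : JStrat A) : Prop :=
  Language.IsRegular
    {x : List (HSym A) | ∃ (α : List (HSym A)) (a : A),
      G.Fn a ∧ σ α a = JMove.call ∧ x = α ++ [Sum.inl a]}

/-- One step of a strategy automaton of a strongly regular strategy, on the state
set `Q ∪ {Call}` (`none` is the absorbing state `Call`). -/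
def optStep {Q : Type} (δA : Q → A → Option Q) (o : Option Q) (a : A) : Option Q :=
  o.bind (fun q => δA q a)

/-- `σ` is strongly regular: given by an automaton obtained from `T` by rerouting
some transitions to a new accepting state `Call`; Juliet plays `Call` on `(α,a)`
iff the automaton maps `♮α·a` to `Call`. -/
def CFGame.StronglyRegular (G : CFGame A) (σ : JStrat A) : Prop :=
  ∃ δA : G.Q → A → Option G.Q,
    (∀ q a, δA q a = some (G.T.step q a) ∨ δA q a = none) ∧
    ∀ (α : List (HSym A)) (a : A), G.Fn a →
      (σ α a = JMove.call ↔
        List.foldl (optStep δA) (some G.T.start) (flat α ++ [a]) = none)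

/-- Shortlex (strict) order on words. -/
def shortLex [LinearOrder A] (v w : List A) : Prop :=
  v.length < w.length ∨ (v.length = w.length ∧ List.Lex (· < ·) v w)

/-- `V <_sl W` for sets of words: the shortlex-least word of the symmetric
difference belongs to `W`. -/
def slLT [LinearOrder A] (V W : Set (List A)) : Prop :=
  ∃ w : List A, w ∈ W ∧ w ∉ V ∧ ∀ v : List A, shortLex v w → (v ∈ V ↔ v ∈ W)

/-- `V ≤_sl W` for sets of words. -/
def slLE [LinearOrder A] (V W : Set (List A)) : Prop := V = W ∨ slLT V W

/-- `σ` is weakly dominant: `W(σ') ≤_sl W(σ)` for every one-pass strategy `σ'`. -/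
def CFGame.WeaklyDominant [LinearOrder A] (G : CFGame A) (σ : JStrat A) : Prop :=
  ∀ σ' : JStrat A, slLE (G.W σ') (G.W σ)

/-- The bounded depth property. -/
def CFGame.BoundedDepthProperty (G : CFGame A) : Prop :=
  ∃ B : ℕ → ℕ, ∀ σ : JStrat A, ∀ k : ℕ, ∃ σk : JStrat A,
    ∀ w ∈ G.W σ, w.length ≤ k →
      G.WinsOn σk w ∧
      ∀ τ : RStrat A, G.RValid τ → ∀ n : ℕ, (G.play σk τ w n).2.2 ≤ B w.length

/-- Prefix-freeness of all replacement languages. -/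
def CFGame.PrefixFree (G : CFGame A) : Prop :=
  ∀ (a : A) (u v : List A), G.R a u → G.R a v → u <+: v → u = v

/-- Non-recursiveness: no function symbol can be derived from itself. -/
def CFGame.NonRecursive (G : CFGame A) : Prop :=
  ¬ ∃ (n : ℕ) (f : ℕ → A), 1 ≤ n ∧ f 0 = f n ∧ (∀ i ≤ n, G.Fn (f i)) ∧
    ∀ k < n, ∃ v : List A, G.R (f k) v ∧ f (k + 1) ∈ v

/-- `σ` is almost undominated: only finitely many words are lost by `σ` but won
by some strategy dominating `σ`. -/
def CFGame.AlmostUndominated (G : CFGame A) (σ : JStrat A) : Prop :=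
  Set.Finite {w : List A | ¬ G.WinsOn σ w ∧
    ∃ σ' : JStrat A, G.W σ ⊆ G.W σ' ∧ G.WinsOn σ' w}

/-- Convergence of a sequence of one-pass strategies. -/
def Converges (G : CFGame A) (σs : ℕ → JStrat A) (σ : JStrat A) : Prop :=
  ∀ n : ℕ, ∃ k0 : ℕ, ∀ k ≥ k0, ∀ α : List (HSym A), α.length ≤ n →
    ∀ a : A, G.Fn a → σ α a = σs k α a

/-- The one-pass strategy defined by a DFA `M` over Σ̂ (a strategy automaton):
play `Call` on `(α,a)` iff `M` accepts `α·a`. -/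
noncomputable def autoStrat {S : Type} (M : DFA (HSym A) S) : JStrat A :=
  fun α a =>
    letI := Classical.propDecidable (M.eval (α ++ [Sum.inl a]) ∈ M.accept)
    if M.eval (α ++ [Sum.inl a]) ∈ M.accept then JMove.call else JMove.read

/-- `States(q; w, σ)`: the `T`-states `δ*(q, ♮α)` over final history strings `α`
of plays of `σ` on `w`. -/
def CFGame.StatesOf (G : CFGame A) (σ : JStrat A) (q : G.Q) (w : List A) : Set G.Q :=
  {q' | ∃ τ : RStrat A, G.RValid τ ∧ ∃ n : ℕ,
    (G.play σ τ w n).2.1 = [] ∧ G.T.evalFrom q (flat (G.play σ τ w n).1) = q'}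

/-- `(p, a, S)` is an effect triple of `σ`. -/
def CFGame.IsEffectTriple (G : CFGame A) (σ : JStrat A) (t : G.Q × A × Set G.Q) : Prop :=
  G.StatesOf σ t.1 [t.2.1] ⊆ t.2.2

/-- An effect triple is trivial if `δ(p,a) ∈ S`. -/
def CFGame.TrivialTriple (G : CFGame A) (t : G.Q × A × Set G.Q) : Prop :=
  G.T.step t.1 t.2.1 ∈ t.2.2

/-- The substrategy `σ^α`. -/
def subStrat (σ : JStrat A) (α : List (HSym A)) : JStrat A :=
  fun β a => σ (α ++ β) a

/-- The effect set `E(σ)`: all effect triples of all substrategies of `σ`. -/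
def CFGame.EffectSet (G : CFGame A) (σ : JStrat A) : Set (G.Q × A × Set G.Q) :=
  {t | ∃ α : List (HSym A), G.IsEffectTriple (subStrat σ α) t}

/-- The transition relation of the NFA `N_E` associated with a set `E` of effect
triples (state set `P(Q)`, initial state `{s}`, accepting states the subsets of `F`). -/
def CFGame.NEStep (G : CFGame A) (E : Set (G.Q × A × Set G.Q))
    (S : Set G.Q) (a : A) (S' : Set G.Q) : Prop :=
  ∀ p ∈ S, ∃ S'' : Set G.Q, S'' ⊆ S' ∧ (p, a, S'') ∈ E

/-- A strategy for the online word problem `OnlineNFA(N_E)`. -/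
def CFGame.NEOnlineStrat (G : CFGame A) (E : Set (G.Q × A × Set G.Q))
    (ρ : List A → Set G.Q) : Prop :=
  ρ [] = {G.T.start} ∧ ∀ (w : List A) (a : A), G.NEStep E (ρ w) a (ρ (w ++ [a]))

/-- The winning set of a strategy for `OnlineNFA(N_E)`. -/
def CFGame.NEWins (G : CFGame A) (ρ : List A → Set G.Q) : Set (List A) :=
  {w | ρ w ⊆ G.T.accept}

/-- A strategy automaton `M` is `(p,a,St)`-inducing. -/
def CFGame.Inducing (G : CFGame A) {S : Type} (M : DFA (HSym A) S)
    (p : G.Q) (a : A) (St : Set G.Q) : Prop :=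
  G.Terminating (autoStrat M) ∧ G.Fn a ∧
  (∀ u : List A, G.R a u → G.StatesOf (autoStrat M) p u ⊆ St) ∧
  ∃ QA : G.Q → Set S,
    (∀ q ∈ St, ∀ q' ∈ St, q ≠ q' → Disjoint (QA q) (QA q')) ∧
    ∀ u : List A, G.R a u → ∀ τ : RStrat A, G.RValid τ → ∀ n : ℕ,
      (G.play (autoStrat M) τ u n).2.1 = [] →
      ((∀ q ∈ St,
          (M.eval (G.play (autoStrat M) τ u n).1 ∈ QA q ↔
            G.T.evalFrom p (flat (G.play (autoStrat M) τ u n).1) = q)) ∧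
        ∀ β : List (HSym A), β <+: (G.play (autoStrat M) τ u n).1 →
          β ≠ (G.play (autoStrat M) τ u n).1 → ∀ r ∈ St, M.eval β ∉ QA r)



section ShortLexBasics
set_option linter.unusedSectionVars false

variable {A : Type} [Fintype A] [LinearOrder A]

lemma shortLex_trans {u v w : List A} (h1 : shortLex u v) (h2 : shortLex v w) :
    shortLex u w := by
  rcases h1 with h1 | ⟨e1, l1⟩ <;> rcases h2 with h2 | ⟨e2, l2⟩
  · exact Or.inl (h1.trans h2)
  · exact Or.inl (e2 ▸ h1)
  · exact Or.inl (e1 ▸ h2)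
  · exact Or.inr ⟨e1.trans e2, List.lex_trans (fun h h' => lt_trans h h') l1 l2⟩

lemma shortLex_irrefl (w : List A) : ¬ shortLex w w := by
  rintro (h | ⟨-, h⟩)
  · exact lt_irrefl _ h
  · exact irrefl_of _ w h

lemma shortLex_asymm {v w : List A} (h : shortLex v w) : ¬ shortLex w v :=
  fun h' => shortLex_irrefl w (shortLex_trans h' h)

lemma shortLex_total (v w : List A) : shortLex v w ∨ v = w ∨ shortLex w v := by
  rcases lt_trichotomy v.length w.length with h | h | h
  · exact Or.inl (Or.inl h)
  · rcases trichotomous (r := List.Lex ((· < ·) : A → A → Prop)) v w with l | e | l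
    · exact Or.inl (Or.inr ⟨h, l⟩)
    · exact Or.inr (Or.inl e)
    · exact Or.inr (Or.inr (Or.inr ⟨h.symm, l⟩))
  · exact Or.inr (Or.inr (Or.inl h))

lemma not_shortLex_nil (v : List A) : ¬ shortLex v [] := by
  rintro (h | ⟨e, l⟩)
  · simp at h
  · cases l

lemma shortLex_cons {x v : List A} (c : A) (h : shortLex x v) : shortLex (c :: x) (c :: v) := by
  rcases h with h | ⟨e, l⟩
  · exact Or.inl (by simpa using h)
  · exact Or.inr ⟨by simpa using e, List.Lex.cons l⟩

lemma shortLex_length_le {x w : List A} (h : shortLex x w) : x.length ≤ w.length := by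
  rcases h with h | ⟨e, -⟩
  · exact le_of_lt h
  · exact le_of_eq e

lemma shortLex_downset_finite (w : List A) : {v : List A | shortLex v w}.Finite := by
  apply (List.finite_length_le A w.length).subset
  intro v hv
  exact shortLex_length_le hv

lemma shortLex_wf : WellFounded (@shortLex A _) := by
  constructor
  intro w
  have key : ∀ n (w : List A), (shortLex_downset_finite w).toFinset.card ≤ n →
      Acc shortLex w := by
    intro n
    induction n with
    | zero =>
      intro w hw
      constructor
      intro v hv
      exfalso
      have hm : v ∈ (shortLex_downset_finite w).toFinset := by simpa using hv
      have := Finset.card_pos.mpr ⟨v, hm⟩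
      omega
    | succ n ih =>
      intro w hw
      constructor
      intro v hv
      apply ih
      have hss : (shortLex_downset_finite v).toFinset ⊂ (shortLex_downset_finite w).toFinset := by
        constructor
        · intro x hx
          simp only [Set.Finite.mem_toFinset, Set.mem_setOf_eq] at *
          exact shortLex_trans hx hv
        · intro hsub
          have hm : v ∈ (shortLex_downset_finite w).toFinset := by simpa using hv
          have := hsub hm
          simp only [Set.Finite.mem_toFinset, Set.mem_setOf_eq] at this
          exact shortLex_irrefl v this
      have := Finset.card_lt_card hss
      omega
  exact key _ w le_rfl

lemma exists_shortLex_least {D : Set (List A)} (h : D.Nonempty) :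
    ∃ w ∈ D, ∀ v ∈ D, v = w ∨ shortLex w v := by
  obtain ⟨w, hw, hmin⟩ := shortLex_wf.has_min D h
  refine ⟨w, hw, fun v hv => ?_⟩
  rcases shortLex_total v w with hlt | he | hgt
  · exact absurd hlt (hmin v hv)
  · exact Or.inl he
  · exact Or.inr hgt

/-- A generic maximum lemma for total transitive relations on finite sets. -/
lemma finset_exists_rel_max {β : Type*} (r : β → β → Prop)
    (htot : ∀ x y, r x y ∨ r y x) (htrans : ∀ {x y z}, r x y → r y z → r x z)
    (s : Finset β) (hs : s.Nonempty) : ∃ w ∈ s, ∀ v ∈ s, r v w := by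
  classical
  induction s using Finset.induction_on with
  | empty => exact absurd hs (by simp)
  | @insert a s hnotmem ih =>
    rcases s.eq_empty_or_nonempty with rfl | hne
    · refine ⟨a, by simp, ?_⟩
      intro v hv
      simp only [Finset.mem_insert, Finset.notMem_empty, or_false] at hv
      subst hv
      rcases htot v v with h | h <;> exact h
    · obtain ⟨w, hw, hmax⟩ := ih hne
      rcases htot a w with h | h
      · refine ⟨w, Finset.mem_insert_of_mem hw, ?_⟩
        intro v hv
        rcases Finset.mem_insert.mp hv with rfl | hv
        · exact h
        · exact hmax v hv
      · refine ⟨a, Finset.mem_insert_self a s, ?_⟩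
        intro v hv
        rcases Finset.mem_insert.mp hv with rfl | hv
        · rcases htot v v with h' | h' <;> exact h'
        · exact htrans (hmax v hv) h

lemma exists_shortLex_max {D : Set (List A)} (hD : D.Finite) (h : D.Nonempty) :
    ∃ w ∈ D, ∀ v ∈ D, v = w ∨ shortLex v w := by
  obtain ⟨w, hw, hmax⟩ := finset_exists_rel_max (fun v w : List A => v = w ∨ shortLex v w)
    (fun x y => by
      rcases shortLex_total x y with h | h | h
      · exact Or.inl (Or.inr h)
      · exact Or.inl (Or.inl h)
      · exact Or.inr (Or.inr h))
    (fun {x y z} hxy hyz => by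
      rcases hxy with rfl | hxy
      · exact hyz
      · rcases hyz with rfl | hyz
        · exact Or.inr hxy
        · exact Or.inr (shortLex_trans hxy hyz))
    hD.toFinset (by simpa [Set.Finite.toFinset_nonempty] using h)
  exact ⟨w, by simpa using hw, fun v hv => hmax v (by simpa using hv)⟩

/-- Every word of length at most `n` is `shortLex`-below (or equal to)
the word `replicate n ⊤`. -/
lemma shortLex_le_replicate_top {m : A} (hm : ∀ a : A, a ≤ m) :
    ∀ (x : List A) (n : ℕ), x.length ≤ n →
      x = List.replicate n m ∨ shortLex x (List.replicate n m) := by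
  have lexkey : ∀ (x : List A) (n : ℕ), x.length = n →
      x = List.replicate n m ∨ List.Lex (· < ·) x (List.replicate n m) := by
    intro x
    induction x with
    | nil =>
      intro n hn
      simp only [List.length_nil] at hn
      subst hn
      simp
    | cons a x ih =>
      intro n hn
      cases n with
      | zero => simp at hn
      | succ n =>
        simp only [List.length_cons, Nat.succ.injEq] at hn
        rw [List.replicate_succ]
        rcases lt_or_eq_of_le (hm a) with hlt | rfl
        · exact Or.inr (List.Lex.rel hlt)
        · rcases ih n hn with he | hl
          · exact Or.inl (by rw [he])
          · exact Or.inr (List.Lex.cons hl)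
  intro x n hn
  rcases lt_or_eq_of_le hn with hlt | he
  · exact Or.inr (Or.inl (by simpa using hlt))
  · rcases lexkey x n he with h | h
    · exact Or.inl h
    · exact Or.inr (Or.inr ⟨by simpa using he, h⟩)

end ShortLexBasics

section SlLE
set_option linter.unusedSectionVars false

variable {A : Type} [Fintype A] [LinearOrder A]

lemma exists_least_diff {V W : Set (List A)} (h : V ≠ W) :
    ∃ w, ¬ (w ∈ V ↔ w ∈ W) ∧ ∀ v, shortLex v w → (v ∈ V ↔ v ∈ W) := by
  have hne : {w | ¬ (w ∈ V ↔ w ∈ W)}.Nonempty := by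
    by_contra hc
    apply h
    ext x
    have := Set.not_nonempty_iff_eq_empty.mp hc
    by_contra hx
    have : x ∈ ({w | ¬ (w ∈ V ↔ w ∈ W)} : Set (List A)) := hx
    simp_all
  obtain ⟨w, hw, hleast⟩ := exists_shortLex_least hne
  refine ⟨w, hw, fun v hv => ?_⟩
  by_contra hvd
  rcases hleast v hvd with rfl | hlt
  · exact shortLex_irrefl v hv
  · exact shortLex_asymm hv hlt

lemma slLE_intro {V W : Set (List A)}
    (h : ∀ w, ¬ (w ∈ V ↔ w ∈ W) → (∀ v, shortLex v w → (v ∈ V ↔ v ∈ W)) →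
      w ∈ W ∧ w ∉ V) : slLE V W := by
  by_cases he : V = W
  · exact Or.inl he
  · obtain ⟨w, hw, hag⟩ := exists_least_diff he
    obtain ⟨h1, h2⟩ := h w hw hag
    exact Or.inr ⟨w, h1, h2, hag⟩

lemma not_slLE_of_witness {V W : Set (List A)} {w : List A}
    (hw : w ∈ V) (hnw : w ∉ W) (hag : ∀ v, shortLex v w → (v ∈ V ↔ v ∈ W)) :
    ¬ slLE V W := by
  rintro (rfl | ⟨w', h1, h2, hag'⟩)
  · exact hnw hw
  · rcases shortLex_total w w' with hlt | rfl | hgt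
    · exact hnw ((hag' w hlt).mp hw)
    · exact h2 hw
    · exact h2 ((hag w' hgt).mpr h1)

lemma slLE_trans {U V W : Set (List A)} (h1 : slLE U V) (h2 : slLE V W) : slLE U W := by
  rcases h1 with rfl | ⟨w1, hw1V, hw1U, hag1⟩
  · exact h2
  rcases h2 with rfl | ⟨w2, hw2W, hw2V, hag2⟩
  · exact Or.inr ⟨w1, hw1V, hw1U, hag1⟩
  rcases shortLex_total w1 w2 with hlt | rfl | hgt
  · refine Or.inr ⟨w1, (hag2 w1 hlt).mp hw1V, hw1U, fun v hv => ?_⟩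
    exact (hag1 v hv).trans (hag2 v (shortLex_trans hv hlt))
  · exact absurd hw1V hw2V
  · refine Or.inr ⟨w2, hw2W, fun hm => hw2V ((hag1 w2 hgt).mp hm), fun v hv => ?_⟩
    exact (hag1 v (shortLex_trans hv hgt)).trans (hag2 v hv)

lemma slLE_total (V W : Set (List A)) : slLE V W ∨ slLE W V := by
  by_cases he : V = W
  · exact Or.inl (Or.inl he)
  · obtain ⟨w, hw, hag⟩ := exists_least_diff he
    by_cases hwW : w ∈ W
    · exact Or.inl (Or.inr ⟨w, hwW, fun hm => hw ⟨fun _ => hwW, fun _ => hm⟩, hag⟩)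
    · have hwV : w ∈ V := by tauto
      exact Or.inr (Or.inr ⟨w, hwV, hwW, fun v hv => (hag v hv).symm⟩)

/-- The key composition: `V ≤ₛₗ V*` and `V* ⊆ W` imply `V ≤ₛₗ W`. -/
lemma slLE_of_slLE_of_subset {V V' W : Set (List A)} (h1 : slLE V V') (h2 : V' ⊆ W) :
    slLE V W := by
  rcases h1 with rfl | ⟨w', hw'V', hw'V, hag⟩
  · apply slLE_intro
    intro w hw hag'
    by_cases hwW : w ∈ W
    · exact ⟨hwW, fun hm => hw (iff_of_true hm hwW)⟩
    · exact absurd (iff_of_false (fun hm => hwW (h2 hm)) hwW) hw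
  · apply slLE_intro
    intro w hw hag'
    by_cases hwW : w ∈ W
    · exact ⟨hwW, fun hm => hw (iff_of_true hm hwW)⟩
    · exfalso
      have hwV : w ∈ V := by
        by_contra hwV
        exact hw (iff_of_false hwV hwW)
      have hwV' : w ∉ V' := fun hm => hwW (h2 hm)
      rcases shortLex_total w w' with hlt | rfl | hgt
      · exact hwV' ((hag w hlt).mp hwV)
      · exact hwV' hw'V'
      · exact hw'V ((hag' w' hgt).mpr (h2 hw'V'))
  
end SlLE


section SupMachinery
set_option linter.unusedSectionVars false

variable {A : Type} [Fintype A] [LinearOrder A]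

/-- A strategy for the online word problem starting at state `S`. -/
def OnlineFrom (G : CFGame A) (E : Set (G.Q × A × Set G.Q)) (S : Set G.Q)
    (ρ : List A → Set G.Q) : Prop :=
  ρ [] = S ∧ ∀ (w : List A) (a : A), G.NEStep E (ρ w) a (ρ (w ++ [a]))

/-- There exists an online strategy starting at `S`. -/
def OKS (G : CFGame A) (E : Set (G.Q × A × Set G.Q)) (S : Set G.Q) : Prop :=
  ∃ ρ, OnlineFrom G E S ρ

variable (G : CFGame A) (E : Set (G.Q × A × Set G.Q))

lemma OnlineFrom.step0 {S ρ} (h : OnlineFrom G E S ρ) (c : A) :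
    G.NEStep E S c (ρ [c]) := by
  have := h.2 [] c
  rwa [List.nil_append, h.1] at this

lemma OnlineFrom.shift {S ρ} (h : OnlineFrom G E S ρ) (c : A) :
    OnlineFrom G E (ρ [c]) (fun x => ρ (c :: x)) := by
  refine ⟨rfl, fun w a => ?_⟩
  have := h.2 (c :: w) a
  simpa using this

lemma mem_NEWins_iff (ρ : List A → Set G.Q) (w : List A) :
    w ∈ G.NEWins ρ ↔ ρ w ⊆ G.T.accept := Iff.rfl

/-- The shortlex-supremum of the winning sets of online strategies from `S`,
defined by well-founded recursion on shortlex. -/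
noncomputable def SupM : List A → Set G.Q → Prop :=
  shortLex_wf.fix (C := fun _ => Set G.Q → Prop) (fun w ih S =>
    ∃ ρ, OnlineFrom G E S ρ ∧ (∀ v (h : shortLex v w), (v ∈ G.NEWins ρ ↔ ih v h S)) ∧
      w ∈ G.NEWins ρ)

lemma supM_iff (w : List A) (S : Set G.Q) :
    SupM G E w S ↔ ∃ ρ, OnlineFrom G E S ρ ∧
      (∀ v, shortLex v w → (v ∈ G.NEWins ρ ↔ SupM G E v S)) ∧ w ∈ G.NEWins ρ := by
  have h := congrFun (WellFounded.fix_eq (C := fun _ => Set G.Q → Prop) shortLex_wf (fun w ih S =>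
    ∃ ρ, OnlineFrom G E S ρ ∧ (∀ v (h : shortLex v w), (v ∈ G.NEWins ρ ↔ ih v h S)) ∧
      w ∈ G.NEWins ρ) w) S
  exact Iff.of_eq h

/-- Every online strategy from `S` is shortlex-dominated by the supremum. -/
lemma NEWins_slLE_supM {S : Set G.Q} {ρ : List A → Set G.Q}
    (h : OnlineFrom G E S ρ) : slLE (G.NEWins ρ) {w | SupM G E w S} := by
  apply slLE_intro
  intro w hw hag
  by_cases hmem : w ∈ G.NEWins ρ
  · exfalso
    have hsup : SupM G E w S := (supM_iff G E w S).mpr ⟨ρ, h, fun v hv => hag v hv, hmem⟩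
    exact hw (iff_of_true hmem hsup)
  · refine ⟨?_, hmem⟩
    by_contra hsup
    exact hw (iff_of_false hmem hsup)

lemma exists_gmax {S : Set G.Q} (h : OKS G E S) (c : A) :
    ∃ S', (G.NEStep E S c S' ∧ OKS G E S') ∧
      ∀ S'', G.NEStep E S c S'' → OKS G E S'' →
        slLE {w | SupM G E w S''} {w | SupM G E w S'} := by
  classical
  haveI := G.fintypeQ
  haveI : Fintype (Set G.Q) := Set.fintype
  have hfin : {S' : Set G.Q | G.NEStep E S c S' ∧ OKS G E S'}.Finite := Set.toFinite _
  have hne : {S' : Set G.Q | G.NEStep E S c S' ∧ OKS G E S'}.Nonempty := by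
    obtain ⟨ρ, hρ⟩ := h
    exact ⟨ρ [c], hρ.step0 G E c, ⟨fun x => ρ (c :: x), hρ.shift G E c⟩⟩
  obtain ⟨S', hS', hmax⟩ := finset_exists_rel_max
    (fun S1 S2 : Set G.Q => slLE {w | SupM G E w S1} {w | SupM G E w S2})
    (fun x y => slLE_total _ _) (fun {x y z} => slLE_trans) hfin.toFinset
    (by obtain ⟨x, hx⟩ := hne; exact ⟨x, hfin.mem_toFinset.mpr hx⟩)
  simp only [Set.Finite.mem_toFinset, Set.mem_setOf_eq] at hS' hmax
  exact ⟨S', hS', fun S'' h1 h2 => hmax S'' ⟨h1, h2⟩⟩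

lemma exists_gmax' (S : Set G.Q) (c : A) :
    ∃ S', OKS G E S → ((G.NEStep E S c S' ∧ OKS G E S') ∧
      ∀ S'', G.NEStep E S c S'' → OKS G E S'' →
        slLE {w | SupM G E w S''} {w | SupM G E w S'}) := by
  by_cases h : OKS G E S
  · obtain ⟨S', h1, h2⟩ := exists_gmax G E h c
    exact ⟨S', fun _ => ⟨h1, h2⟩⟩
  · exact ⟨∅, fun hc => absurd hc h⟩

/-- The greedy optimal transition function on subsets. -/
noncomputable def gfun (S : Set G.Q) (c : A) : Set G.Q :=
  (exists_gmax' G E S c).choose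

lemma gfun_spec {S : Set G.Q} (h : OKS G E S) (c : A) :
    (G.NEStep E S c (gfun G E S c) ∧ OKS G E (gfun G E S c)) ∧
      ∀ S'', G.NEStep E S c S'' → OKS G E S'' →
        slLE {w | SupM G E w S''} {w | SupM G E w (gfun G E S c)} :=
  (exists_gmax' G E S c).choose_spec h

/-- Threshold approximation: there is a single online strategy agreeing with the
supremum on all words up to `w` in shortlex order. -/
lemma exists_agree_upto (w : List A) : ∀ (S : Set G.Q), OKS G E S →
    ∃ ρ, OnlineFrom G E S ρ ∧
      ∀ v, (v = w ∨ shortLex v w) → (v ∈ G.NEWins ρ ↔ SupM G E v S) := by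
  refine shortLex_wf.induction (C := fun w => ∀ (S : Set G.Q), OKS G E S →
    ∃ ρ, OnlineFrom G E S ρ ∧
      ∀ v, (v = w ∨ shortLex v w) → (v ∈ G.NEWins ρ ↔ SupM G E v S)) w ?_
  clear w
  intro w IH S hS
  have below : ∃ ρ, OnlineFrom G E S ρ ∧
      ∀ v, shortLex v w → (v ∈ G.NEWins ρ ↔ SupM G E v S) := by
    by_cases hD : {v : List A | shortLex v w}.Nonempty
    · obtain ⟨v₀, hv₀, hmax⟩ := exists_shortLex_max (shortLex_downset_finite w) hD
      obtain ⟨ρ, hρ, hag⟩ := IH v₀ hv₀ S hS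
      exact ⟨ρ, hρ, fun v hv => hag v (hmax v hv)⟩
    · obtain ⟨ρ, hρ⟩ := hS
      exact ⟨ρ, hρ, fun v hv => absurd ⟨v, hv⟩ hD⟩
  obtain ⟨ρ₀, hρ₀, hag₀⟩ := below
  by_cases hsup : SupM G E w S
  · obtain ⟨ρ₁, hρ₁, hag₁, hw₁⟩ := (supM_iff G E w S).mp hsup
    refine ⟨ρ₁, hρ₁, ?_⟩
    rintro v (rfl | hv)
    · exact iff_of_true hw₁ hsup
    · exact hag₁ v hv
  · refine ⟨ρ₀, hρ₀, ?_⟩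
    rintro v (rfl | hv)
    · refine iff_of_false ?_ hsup
      intro hmem
      exact hsup ((supM_iff G E v S).mpr ⟨ρ₀, hρ₀, hag₀, hmem⟩)
    · exact hag₀ v hv

lemma supM_nil {S : Set G.Q} (hS : OKS G E S) :
    SupM G E [] S ↔ S ⊆ G.T.accept := by
  rw [supM_iff]
  constructor
  · rintro ⟨ρ, hρ, -, hw⟩
    have : ρ [] ⊆ G.T.accept := hw
    rwa [hρ.1] at this
  · intro hacc
    obtain ⟨ρ, hρ⟩ := hS
    refine ⟨ρ, hρ, fun v hv => absurd hv (not_shortLex_nil v), ?_⟩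
    show ρ [] ⊆ G.T.accept
    rwa [hρ.1]

lemma supM_cons_aux : ∀ w : List A, ∀ S : Set G.Q, OKS G E S → ∀ (c : A) (v : List A),
    w = c :: v → (SupM G E w S ↔ SupM G E v (gfun G E S c)) := by
  intro w
  refine shortLex_wf.induction (C := fun w => ∀ S : Set G.Q, OKS G E S →
    ∀ (c : A) (v : List A), w = c :: v →
      (SupM G E w S ↔ SupM G E v (gfun G E S c))) w ?_
  clear w
  intro w IH S hS c v heq
  constructor
  · intro hsup
    obtain ⟨ρ, hρ, hag, hw⟩ := (supM_iff G E w S).mp hsup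
    have hρ' : OnlineFrom G E (ρ [c]) (fun x => ρ (c :: x)) := hρ.shift G E c
    have hv' : v ∈ G.NEWins (fun x => ρ (c :: x)) := by
      show ρ (c :: v) ⊆ G.T.accept
      rw [← heq]
      exact hw
    have hagv : ∀ x, shortLex x v →
        (x ∈ G.NEWins (fun y => ρ (c :: y)) ↔ SupM G E x (gfun G E S c)) := by
      intro x hx
      have hcx : shortLex (c :: x) w := heq ▸ shortLex_cons c hx
      have h1 : (c :: x) ∈ G.NEWins ρ ↔ SupM G E (c :: x) S := hag (c :: x) hcx
      have h2 : SupM G E (c :: x) S ↔ SupM G E x (gfun G E S c) :=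
        IH (c :: x) hcx S hS c x rfl
      exact (Iff.rfl.trans h1).trans h2
    by_contra hnot
    have h1 : slLE (G.NEWins fun x => ρ (c :: x)) {w | SupM G E w (ρ [c])} :=
      NEWins_slLE_supM G E hρ'
    have h2 : slLE {w | SupM G E w (ρ [c])} {w | SupM G E w (gfun G E S c)} :=
      (gfun_spec G E hS c).2 (ρ [c]) (hρ.step0 G E c) ⟨_, hρ'⟩
    exact not_slLE_of_witness hv' hnot hagv (slLE_trans h1 h2)
  · intro hsup
    classical
    have hAne : (Finset.univ : Finset A).Nonempty := ⟨c, Finset.mem_univ c⟩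
    set m : A := Finset.univ.max' hAne with hm
    have hmtop : ∀ a : A, a ≤ m := fun a => Finset.le_max' _ a (Finset.mem_univ a)
    set wstar : List A := List.replicate v.length m with hwstar
    have hρs : ∀ c' : A, ∃ ρ, OnlineFrom G E (gfun G E S c') ρ ∧
        ∀ x, (x = wstar ∨ shortLex x wstar) →
          (x ∈ G.NEWins ρ ↔ SupM G E x (gfun G E S c')) :=
      fun c' => exists_agree_upto G E wstar (gfun G E S c') ((gfun_spec G E hS c').1.2)
    choose ρs hpr hags using hρs
    set ρ : List A → Set G.Q := fun x => match x with
      | [] => S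
      | c' :: y => ρs c' y with hρdef
    have hρ : OnlineFrom G E S ρ := by
      refine ⟨rfl, ?_⟩
      intro u a
      match u with
      | [] =>
        show G.NEStep E S a (ρs a [])
        rw [(hpr a).1]
        exact (gfun_spec G E hS a).1.1
      | c' :: y =>
        show G.NEStep E (ρs c' y) a (ρ ((c' :: y) ++ [a]))
        have : ((c' :: y) ++ [a]) = c' :: (y ++ [a]) := rfl
        rw [this]
        exact (hpr c').2 y a
    have key : ∀ x : List A, x.length ≤ v.length → (x = wstar ∨ shortLex x wstar) := by
      intro x hx
      exact shortLex_le_replicate_top hmtop x v.length hx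
    rw [supM_iff]
    refine ⟨ρ, hρ, ?_, ?_⟩
    · intro x hx
      match x with
      | [] =>
        have : ([] : List A) ∈ G.NEWins ρ ↔ S ⊆ G.T.accept := Iff.rfl
        rw [this, supM_nil G E hS]
      | c' :: y =>
        have hlen : y.length ≤ v.length := by
          have := shortLex_length_le hx
          rw [heq] at this
          simpa using this
        have h1 : (c' :: y) ∈ G.NEWins ρ ↔ y ∈ G.NEWins (ρs c') := Iff.rfl
        have h2 : y ∈ G.NEWins (ρs c') ↔ SupM G E y (gfun G E S c') :=
          hags c' y (key y hlen)
        have h3 : SupM G E (c' :: y) S ↔ SupM G E y (gfun G E S c') :=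
          IH (c' :: y) hx S hS c' y rfl
        rw [h1, h2, h3]
    · show ρ w ∈ {T : Set G.Q | T ⊆ G.T.accept}
      rw [heq]
      have h1 : ρ (c :: v) = ρs c v := rfl
      have h2 : v ∈ G.NEWins (ρs c) ↔ SupM G E v (gfun G E S c) :=
        hags c v (key v le_rfl)
      exact h2.mpr hsup

lemma supM_cons {S : Set G.Q} (hS : OKS G E S) (c : A) (v : List A) :
    SupM G E (c :: v) S ↔ SupM G E v (gfun G E S c) :=
  supM_cons_aux G E (c :: v) S hS c v rfl

lemma supM_run : ∀ (w : List A) (S : Set G.Q), OKS G E S →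
    (SupM G E w S ↔ List.foldl (gfun G E) S w ⊆ G.T.accept) := by
  intro w
  induction w with
  | nil => intro S hS; simpa using supM_nil G E hS
  | cons c v ih =>
    intro S hS
    rw [supM_cons G E hS c v, List.foldl_cons]
    exact ih (gfun G E S c) ((gfun_spec G E hS c).1.2)

end SupMachinery
section PlayAlgebra
set_option linter.unusedSectionVars false

variable {A : Type} (G : CFGame A)

/-- Shift of a Romeo strategy. -/
def subRStrat (τ : RStrat A) (γ : List (HSym A)) : RStrat A :=
  fun β a => τ (γ ++ β) a

lemma rvalid_subRStrat {τ : RStrat A} (h : G.RValid τ) (γ : List (HSym A)) :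
    G.RValid (subRStrat τ γ) := fun β a ha => h (γ ++ β) a ha

lemma flat_append (α β : List (HSym A)) : flat (α ++ β) = flat α ++ flat β :=
  List.filterMap_append

lemma flat_inl (a : A) : flat [Sum.inl a] = [a] := rfl

lemma flat_inr (a : A) : flat [Sum.inr a] = ([] : List A) := rfl

lemma autoStrat_call_iff {S : Type} (M : DFA (HSym A) S) (α : List (HSym A)) (a : A) :
    autoStrat M α a = JMove.call ↔ M.eval (α ++ [Sum.inl a]) ∈ M.accept := by
  unfold autoStrat
  split
  · rename_i h
    exact iff_of_true rfl h
  · rename_i h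
    exact iff_of_false (fun hc => JMove.noConfusion hc) h

lemma autoStrat_congr {S₁ S₂ : Type} (M₁ : DFA (HSym A) S₁) (M₂ : DFA (HSym A) S₂)
    (α₁ α₂ : List (HSym A)) (a : A)
    (h : M₁.eval (α₁ ++ [Sum.inl a]) ∈ M₁.accept ↔
      M₂.eval (α₂ ++ [Sum.inl a]) ∈ M₂.accept) :
    autoStrat M₁ α₁ a = autoStrat M₂ α₂ a := by
  by_cases h₁ : M₁.eval (α₁ ++ [Sum.inl a]) ∈ M₁.accept
  · have e1 : autoStrat M₁ α₁ a = JMove.call := by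
      unfold autoStrat; rw [if_pos h₁]
    have e2 : autoStrat M₂ α₂ a = JMove.call := by
      unfold autoStrat; rw [if_pos (h.mp h₁)]
    rw [e1, e2]
  · have e1 : autoStrat M₁ α₁ a = JMove.read := by
      unfold autoStrat; rw [if_neg h₁]
    have e2 : autoStrat M₂ α₂ a = JMove.read := by
      unfold autoStrat; rw [if_neg (fun hh => h₁ (h.mpr hh))]
    rw [e1, e2]

lemma step_empty (σ : JStrat A) (τ : RStrat A) (α : List (HSym A)) (d : ℕ) :
    G.step σ τ (α, [], d) = (α, [], d) := rfl

lemma step_call {σ : JStrat A} {τ : RStrat A} {α : List (HSym A)} {a : A} {k d : ℕ}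
    {v : List (A × ℕ)} (h : G.Fn a ∧ σ α a = JMove.call) :
    G.step σ τ (α, (a, k) :: v, d) =
      (α ++ [Sum.inr a], (τ α a).map (fun b => (b, k + 1)) ++ v, max d (k + 1)) := by
  simp only [CFGame.step]
  rw [if_pos h]

lemma step_read {σ : JStrat A} {τ : RStrat A} {α : List (HSym A)} {a : A} {k d : ℕ}
    {v : List (A × ℕ)} (h : ¬ (G.Fn a ∧ σ α a = JMove.call)) :
    G.step σ τ (α, (a, k) :: v, d) = (α ++ [Sum.inl a], v, d) := by
  simp only [CFGame.step]
  rw [if_neg h]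

lemma stepit_frozen (σ : JStrat A) (τ : RStrat A) (c : Config A) (hc : c.2.1 = []) :
    ∀ m, (G.step σ τ)^[m] c = c := by
  intro m
  induction m with
  | zero => rfl
  | succ m ih =>
    rw [Function.iterate_succ_apply', ih]
    obtain ⟨α, rem, d⟩ := c
    simp only at hc
    rw [hc]
    rfl

lemma play_frozen (σ : JStrat A) (τ : RStrat A) (w : List A) {n : ℕ}
    (h : (G.play σ τ w n).2.1 = []) : ∀ m, n ≤ m → G.play σ τ w m = G.play σ τ w n := by
  intro m hm
  obtain ⟨k, rfl⟩ := Nat.exists_eq_add_of_le hm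
  show (G.step σ τ)^[n + k] _ = _
  rw [Nat.add_comm, Function.iterate_add_apply]
  exact stepit_frozen G σ τ _ h k

lemma step_hist_append (σ : JStrat A) (τ : RStrat A) (c : Config A) (hc : c.2.1 ≠ []) :
    ∃ x, (G.step σ τ c).1 = c.1 ++ [x] := by
  obtain ⟨α, rem, d⟩ := c
  match rem with
  | [] => exact absurd rfl hc
  | (a, k) :: v =>
    by_cases h : G.Fn a ∧ σ α a = JMove.call
    · exact ⟨Sum.inr a, by rw [step_call G h]⟩
    · exact ⟨Sum.inl a, by rw [step_read G h]⟩

lemma stepit_hist_prefix (σ : JStrat A) (τ : RStrat A) (c : Config A) :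
    ∀ m, c.1 <+: ((G.step σ τ)^[m] c).1 := by
  intro m
  induction m with
  | zero => exact List.prefix_refl _
  | succ m ih =>
    rw [Function.iterate_succ_apply']
    set c' := (G.step σ τ)^[m] c
    by_cases hc : c'.2.1 = []
    · obtain ⟨α, rem, d⟩ := c'
      simp only at hc
      subst hc
      exact ih
    · obtain ⟨x, hx⟩ := step_hist_append G σ τ c' hc
      rw [hx]
      exact ih.trans ⟨[x], rfl⟩

/-- Splicing: as long as the play on `x` is not finished, the play on `x ++ z`
agrees with it, keeping `z` untouched at the end. -/
lemma stepit_splice (σ : JStrat A) (τ : RStrat A) (β : List (HSym A))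
    (x z : List (A × ℕ)) (d : ℕ) :
    ∀ n, (∀ m, m < n → ((G.step σ τ)^[m] (β, x, d)).2.1 ≠ []) →
      (G.step σ τ)^[n] (β, x ++ z, d) =
        (((G.step σ τ)^[n] (β, x, d)).1,
          ((G.step σ τ)^[n] (β, x, d)).2.1 ++ z,
          ((G.step σ τ)^[n] (β, x, d)).2.2) := by
  intro n
  induction n with
  | zero => intro _; rfl
  | succ n ih =>
    intro h
    rw [Function.iterate_succ_apply', Function.iterate_succ_apply']
    rw [ih (fun m hm => h m (hm.trans (Nat.lt_succ_self n)))]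
    set c := (G.step σ τ)^[n] (β, x, d) with hcdef
    have hrem : c.2.1 ≠ [] := h n (Nat.lt_succ_self n)
    match hr : c.2.1 with
    | [] => exact absurd hr hrem
    | (a, k) :: v =>
      have hc : c = (c.1, (a, k) :: v, c.2.2) := by
        rw [← hr]
      rw [hc]
      by_cases hcall : G.Fn a ∧ σ c.1 a = JMove.call
      · rw [show ((a,k) :: v) ++ z = (a,k) :: (v ++ z) from rfl]
        rw [step_call G hcall, step_call G hcall]
        simp [List.append_assoc]
      · rw [show ((a,k) :: v) ++ z = (a,k) :: (v ++ z) from rfl]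
        rw [step_read G hcall, step_read G hcall]

/-- Simulation: a play from history `γ` mirrors the play of the shifted
strategies from the empty history, ignoring depth annotations. -/
lemma stepit_sim (σ : JStrat A) (τ : RStrat A) (γ : List (HSym A)) :
    ∀ (c₁ c₂ : Config A), c₁.1 = γ ++ c₂.1 →
      c₁.2.1.map Prod.fst = c₂.2.1.map Prod.fst →
      ∀ n, ((G.step σ τ)^[n] c₁).1 = γ ++ ((G.step (subStrat σ γ) (subRStrat τ γ))^[n] c₂).1 ∧
        ((G.step σ τ)^[n] c₁).2.1.map Prod.fst =
          ((G.step (subStrat σ γ) (subRStrat τ γ))^[n] c₂).2.1.map Prod.fst := by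
  have key : ∀ (c₁ c₂ : Config A), c₁.1 = γ ++ c₂.1 →
      c₁.2.1.map Prod.fst = c₂.2.1.map Prod.fst →
      (G.step σ τ c₁).1 = γ ++ (G.step (subStrat σ γ) (subRStrat τ γ) c₂).1 ∧
        (G.step σ τ c₁).2.1.map Prod.fst =
          (G.step (subStrat σ γ) (subRStrat τ γ) c₂).2.1.map Prod.fst := by
    intro c₁ c₂ h1 h2
    obtain ⟨α₁, rem₁, d₁⟩ := c₁
    obtain ⟨α₂, rem₂, d₂⟩ := c₂
    simp only at h1 h2 ⊢
    match rem₁, rem₂, h2 with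
    | [], [], _ =>
      rw [step_empty, step_empty]
      exact ⟨h1, rfl⟩
    | (a₁, k₁) :: v₁, (a₂, k₂) :: v₂, h2 =>
      simp only [List.map_cons, List.cons.injEq] at h2
      obtain ⟨rfl, hv⟩ := h2
      have hσ : σ α₁ a₁ = subStrat σ γ α₂ a₁ := by
        show σ α₁ a₁ = σ (γ ++ α₂) a₁
        rw [h1]
      have hτ : τ α₁ a₁ = subRStrat τ γ α₂ a₁ := by
        show τ α₁ a₁ = τ (γ ++ α₂) a₁
        rw [h1]
      by_cases hcall : G.Fn a₁ ∧ σ α₁ a₁ = JMove.call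
      · rw [step_call G hcall, step_call G (by rw [← hσ]; exact hcall)]
        refine ⟨by rw [h1, List.append_assoc], ?_⟩
        simp only [List.map_append, List.map_map]
        rw [← hτ, hv]
        simp [Function.comp_def]
      · rw [step_read G hcall, step_read G (by rw [← hσ]; exact hcall)]
        exact ⟨by rw [h1, List.append_assoc], hv⟩
  intro c₁ c₂ h1 h2 n
  induction n with
  | zero => exact ⟨h1, h2⟩
  | succ n ih =>
    rw [Function.iterate_succ_apply', Function.iterate_succ_apply']
    exact key _ _ ih.1 ih.2

/-- Congruence: two Juliet strategies that agree on all decisions taken in the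
first `n` steps of the play produce the same play. -/
lemma stepit_cong (σ₁ σ₂ : JStrat A) (τ : RStrat A) (c₀ : Config A) :
    ∀ n, (∀ m, m < n → ∀ a k v,
        ((G.step σ₁ τ)^[m] c₀).2.1 = (a, k) :: v →
        σ₁ ((G.step σ₁ τ)^[m] c₀).1 a = σ₂ ((G.step σ₁ τ)^[m] c₀).1 a) →
      (G.step σ₁ τ)^[n] c₀ = (G.step σ₂ τ)^[n] c₀ := by
  intro n
  induction n with
  | zero => intro _; rfl
  | succ n ih =>
    intro h
    rw [Function.iterate_succ_apply', Function.iterate_succ_apply']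
    rw [← ih (fun m hm => h m (hm.trans (Nat.lt_succ_self n)))]
    set c := (G.step σ₁ τ)^[n] c₀ with hcdef
    match hr : c.2.1 with
    | [] =>
      have hc : c = (c.1, [], c.2.2) := by rw [← hr]
      rw [hc, step_empty, step_empty]
    | (a, k) :: v =>
      have hc : c = (c.1, (a, k) :: v, c.2.2) := by rw [← hr]
      have hσ := h n (Nat.lt_succ_self n) a k v hr
      rw [hc]
      by_cases hcall : G.Fn a ∧ σ₁ c.1 a = JMove.call
      · rw [step_call G hcall, step_call G (by rw [← hσ]; exact hcall)]
      · rw [step_read G hcall, step_read G (by rw [← hσ]; exact hcall)]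

end PlayAlgebra
section Construction
set_option linter.unusedSectionVars false
open scoped Classical

variable {A : Type} [Fintype A] [LinearOrder A]
variable (G : CFGame A) (E : Set (G.Q × A × Set G.Q))

/-- Nontrivial triples of `E`. -/
def NT : Type := {t : G.Q × A × Set G.Q // t ∈ E ∧ ¬ G.TrivialTriple t}

variable (hind : ∀ t ∈ E, ¬ G.TrivialTriple t →
    ∃ (S : Type) (_ : Fintype S) (M : DFA (HSym A) S), G.Inducing M t.1 t.2.1 t.2.2)

noncomputable def StT (t : NT G E) : Type := (hind t.1 t.2.1 t.2.2).choose

noncomputable def ftT (t : NT G E) : Fintype (StT G E hind t) :=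
  (hind t.1 t.2.1 t.2.2).choose_spec.choose

noncomputable def MtT (t : NT G E) : DFA (HSym A) (StT G E hind t) :=
  (hind t.1 t.2.1 t.2.2).choose_spec.choose_spec.choose

lemma MtT_inducing (t : NT G E) :
    G.Inducing (MtT G E hind t) t.1.1 t.1.2.1 t.1.2.2 :=
  (hind t.1 t.2.1 t.2.2).choose_spec.choose_spec.choose_spec

noncomputable def QAT (t : NT G E) : G.Q → Set (StT G E hind t) :=
  (MtT_inducing G E hind t).2.2.2.choose

lemma QAT_spec (t : NT G E) :
    (∀ q ∈ t.1.2.2, ∀ q' ∈ t.1.2.2, q ≠ q' →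
        Disjoint (QAT G E hind t q) (QAT G E hind t q')) ∧
      ∀ u : List A, G.R t.1.2.1 u → ∀ τ : RStrat A, G.RValid τ → ∀ n : ℕ,
        (G.play (autoStrat (MtT G E hind t)) τ u n).2.1 = [] →
        ((∀ q ∈ t.1.2.2,
            ((MtT G E hind t).eval (G.play (autoStrat (MtT G E hind t)) τ u n).1 ∈
                QAT G E hind t q ↔
              G.T.evalFrom t.1.1
                (flat (G.play (autoStrat (MtT G E hind t)) τ u n).1) = q)) ∧
          ∀ β : List (HSym A), β <+: (G.play (autoStrat (MtT G E hind t)) τ u n).1 →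
            β ≠ (G.play (autoStrat (MtT G E hind t)) τ u n).1 →
            ∀ r ∈ t.1.2.2, (MtT G E hind t).eval β ∉ QAT G E hind t r) :=
  (MtT_inducing G E hind t).2.2.2.choose_spec

/-- Exit region of the subroutine for `t`. -/
def exitT (t : NT G E) (m : StT G E hind t) : Prop :=
  ∃ q ∈ t.1.2.2, m ∈ QAT G E hind t q

noncomputable def qOfT (t : NT G E) (m : StT G E hind t) (h : exitT G E hind t m) : G.Q :=
  h.choose

lemma qOfT_spec (t : NT G E) (m : StT G E hind t) (h : exitT G E hind t m) :
    qOfT G E hind t m h ∈ t.1.2.2 ∧ m ∈ QAT G E hind t (qOfT G E hind t m h) :=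
  ⟨h.choose_spec.1, h.choose_spec.2⟩

/-- The state space of the combined strategy automaton. -/
def MSt : Type :=
  (Set G.Q × G.Q) ⊕ ((Σ t : NT G E, Set G.Q × StT G E hind t) ⊕ Unit)

noncomputable def fintypeMSt : Fintype (MSt G E hind) := by
  classical
  haveI := G.fintypeQ
  haveI : Fintype (Set G.Q) := Set.fintype
  haveI : Fintype (NT G E) := by unfold NT; infer_instance
  haveI : ∀ t : NT G E, Fintype (StT G E hind t) := ftT G E hind
  unfold MSt
  infer_instance

/-- The choice of a triple to be used at `(S, p)` upon seeing `c`. -/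
noncomputable def decideT (S : Set G.Q) (p : G.Q) (c : A) :
    Option {t : NT G E // t.1.1 = p ∧ t.1.2.1 = c ∧ t.1.2.2 ⊆ gfun G E S c} :=
  if h1 : ∃ S'', S'' ⊆ gfun G E S c ∧ (p, c, S'') ∈ E ∧ G.T.step p c ∈ S'' then none
  else if h2 : ∃ S'', S'' ⊆ gfun G E S c ∧ (p, c, S'') ∈ E then
    some ⟨⟨(p, c, h2.choose), h2.choose_spec.2,
      fun htriv => h1 ⟨h2.choose, h2.choose_spec.1, h2.choose_spec.2, htriv⟩⟩,
      rfl, rfl, h2.choose_spec.1⟩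
  else none

lemma decideT_none {S : Set G.Q} {p : G.Q} {c : A}
    (hne : G.NEStep E S c (gfun G E S c)) (hp : p ∈ S)
    (h : decideT G E S p c = none) : G.T.step p c ∈ gfun G E S c := by
  unfold decideT at h
  split_ifs at h with h1 h2
  · obtain ⟨S'', hsub, -, hstep⟩ := h1
    exact hsub hstep
  · obtain ⟨S'', hsub, hmem⟩ := hne p hp
    exact absurd ⟨S'', hsub, hmem⟩ h2

/-- Outer transitions of the strategy automaton. -/
noncomputable def outerT (S : Set G.Q) (p : G.Q) (x : HSym A) : MSt G E hind :=
  match x with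
  | Sum.inl c =>
    match decideT G E S p c with
    | none => Sum.inl (gfun G E S c, G.T.step p c)
    | some _ => Sum.inr (Sum.inr ())
  | Sum.inr c =>
    match decideT G E S p c with
    | none => Sum.inl (gfun G E S c, G.T.step p c)
    | some t => Sum.inr (Sum.inl ⟨t.1, (gfun G E S c, (MtT G E hind t.1).start)⟩)

/-- The combined strategy automaton. -/
noncomputable def MA : DFA (HSym A) (MSt G E hind) where
  step X x :=
    match X with
    | Sum.inl (S, p) => outerT G E hind S p x
    | Sum.inr (Sum.inl ⟨t, (S', m)⟩) =>
      if h : exitT G E hind t m then outerT G E hind S' (qOfT G E hind t m h) x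
      else Sum.inr (Sum.inl ⟨t, (S', (MtT G E hind t).step m x)⟩)
    | Sum.inr (Sum.inr _) => Sum.inr (Sum.inr ())
  start := Sum.inl ({G.T.start}, G.T.start)
  accept := {X | match X with
    | Sum.inl _ => False
    | Sum.inr (Sum.inl ⟨t, (_, m)⟩) => m ∈ (MtT G E hind t).accept
    | Sum.inr (Sum.inr _) => True}

/-- Observation map on automaton states. -/
noncomputable def obsT : MSt G E hind → Option (Set G.Q × G.Q)
  | Sum.inl (S, p) => some (S, p)
  | Sum.inr (Sum.inl ⟨t, (S', m)⟩) =>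
    if h : exitT G E hind t m then some (S', qOfT G E hind t m h) else none
  | Sum.inr (Sum.inr _) => none

lemma outerT_inl_none {S : Set G.Q} {p : G.Q} {c : A}
    (h : decideT G E S p c = none) :
    outerT G E hind S p (Sum.inl c) = Sum.inl (gfun G E S c, G.T.step p c) := by
  simp only [outerT, h]
  rfl

lemma outerT_inl_some {S : Set G.Q} {p : G.Q} {c : A} {tt}
    (h : decideT G E S p c = some tt) :
    outerT G E hind S p (Sum.inl c) = Sum.inr (Sum.inr ()) := by
  simp only [outerT, h]
  rfl

lemma outerT_inr_some {S : Set G.Q} {p : G.Q} {c : A} {tt}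
    (h : decideT G E S p c = some tt) :
    outerT G E hind S p (Sum.inr c) =
      Sum.inr (Sum.inl ⟨tt.1, (gfun G E S c, (MtT G E hind tt.1).start)⟩) := by
  simp only [outerT, h]
  rfl

lemma mem_accept_inl (S : Set G.Q) (p : G.Q) :
    (Sum.inl (S, p) : MSt G E hind) ∉ (MA G E hind).accept := fun h => h

lemma mem_accept_flag : (Sum.inr (Sum.inr ()) : MSt G E hind) ∈ (MA G E hind).accept :=
  trivial

lemma mem_accept_sub (t : NT G E) (S' : Set G.Q) (m : StT G E hind t) :
    (Sum.inr (Sum.inl ⟨t, (S', m)⟩) : MSt G E hind) ∈ (MA G E hind).accept ↔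
      m ∈ (MtT G E hind t).accept := Iff.rfl

lemma obs_step {X : MSt G E hind} {S : Set G.Q} {p : G.Q}
    (h : obsT G E hind X = some (S, p)) (x : HSym A) :
    (MA G E hind).step X x = outerT G E hind S p x := by
  match X with
  | Sum.inl (S₀, p₀) =>
    simp only [obsT, Option.some.injEq, Prod.mk.injEq] at h
    obtain ⟨rfl, rfl⟩ := h
    rfl
  | Sum.inr (Sum.inl ⟨t, (S', m)⟩) =>
    simp only [obsT] at h
    split_ifs at h with hex
    simp only [Option.some.injEq, Prod.mk.injEq] at h
    obtain ⟨rfl, rfl⟩ := h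
    show (if h : exitT G E hind t m then _ else _) = _
    exact dif_pos hex
  | Sum.inr (Sum.inr _) => exact absurd h (by simp [obsT])

lemma eval_subroutine (t : NT G E) (S' : Set G.Q) :
    ∀ β : List (HSym A),
      (∀ η, η <+: β → η ≠ β → ¬ exitT G E hind t ((MtT G E hind t).eval η)) →
      (MA G E hind).evalFrom (Sum.inr (Sum.inl ⟨t, (S', (MtT G E hind t).start)⟩)) β =
        Sum.inr (Sum.inl ⟨t, (S', (MtT G E hind t).eval β)⟩) := by
  intro β
  induction β using List.reverseRecOn with
  | nil => intro _; rfl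
  | append_singleton β x ih =>
    intro h
    refine (DFA.evalFrom_append_singleton ..).trans ?_
    have hβ : ∀ η, η <+: β → η ≠ β → ¬ exitT G E hind t ((MtT G E hind t).eval η) := by
      intro η hpre hne
      refine h η (hpre.trans ⟨[x], rfl⟩) ?_
      intro heq
      have h1 := hpre.length_le
      have h2 : η.length = β.length + 1 := by rw [heq]; simp
      omega
    rw [ih hβ]
    have hβexit : ¬ exitT G E hind t ((MtT G E hind t).eval β) := by
      refine h β ⟨[x], rfl⟩ (fun heq => ?_)
      have : (β ++ [x]).length = β.length := by rw [← heq]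
      simp at this
    show (if h : exitT G E hind t ((MtT G E hind t).eval β) then _ else _) = _
    refine (dif_neg hβexit).trans ?_
    rw [DFA.eval_append_singleton]

end Construction
section MainInvariant
set_option linter.unusedSectionVars false
set_option maxHeartbeats 1000000
open scoped Classical

variable {A : Type} [Fintype A] [LinearOrder A]
variable (G : CFGame A) (E : Set (G.Q × A × Set G.Q))
variable (hind : ∀ t ∈ E, ¬ G.TrivialTriple t →
    ∃ (S : Type) (_ : Fintype S) (M : DFA (HSym A) S), G.Inducing M t.1 t.2.1 t.2.2)

lemma okfold {S : Set G.Q} (h : OKS G E S) :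
    ∀ w : List A, OKS G E (List.foldl (gfun G E) S w) := by
  suffices key : ∀ (w : List A) (S : Set G.Q), OKS G E S →
      OKS G E (List.foldl (gfun G E) S w) from fun w => key w S h
  intro w
  induction w with
  | nil => intro S hS; exact hS
  | cons c v ih => intro S hS; exact ih (gfun G E S c) ((gfun_spec G E hS c).1.2)

theorem main_inv (hOK : OKS G E {G.T.start}) :
    ∀ (w : List A) (τ : RStrat A), G.RValid τ →
      ∃ n : ℕ, (G.play (autoStrat (MA G E hind)) τ w n).2.1 = [] ∧
        obsT G E hind ((MA G E hind).eval (G.play (autoStrat (MA G E hind)) τ w n).1) =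
          some (List.foldl (gfun G E) {G.T.start} w,
            G.T.evalFrom G.T.start (flat (G.play (autoStrat (MA G E hind)) τ w n).1)) ∧
        G.T.evalFrom G.T.start (flat (G.play (autoStrat (MA G E hind)) τ w n).1) ∈
          List.foldl (gfun G E) {G.T.start} w := by
  intro w
  induction w using List.reverseRecOn with
  | nil =>
    intro τ hτ
    refine ⟨0, rfl, ?_, ?_⟩
    · show obsT G E hind ((MA G E hind).eval []) = _
      rw [DFA.eval_nil]
      rfl
    · show G.T.evalFrom G.T.start (flat []) ∈ _
      rw [show flat ([] : List (HSym A)) = [] from rfl, DFA.evalFrom_nil]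
      exact rfl
  | append_singleton w c ih =>
    intro τ hτ
    obtain ⟨n', hrem', hobs', hmem'⟩ := ih τ hτ
    set σA := autoStrat (MA G E hind) with hσAdef
    have hex : ∃ n, (G.play σA τ w n).2.1 = [] := ⟨n', hrem'⟩
    set n₀ := Nat.find hex with hn₀def
    have hn₀ : (G.play σA τ w n₀).2.1 = [] := Nat.find_spec hex
    have hmin : ∀ m, m < n₀ → (G.play σA τ w m).2.1 ≠ [] :=
      fun m hm => Nat.find_min hex hm
    have hfr : G.play σA τ w n' = G.play σA τ w n₀ := by
      rcases le_total n₀ n' with h | h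
      · exact play_frozen G σA τ w hn₀ n' h
      · exact (play_frozen G σA τ w hrem' n₀ h).symm
    rw [hfr] at hobs' hmem'
    set α := (G.play σA τ w n₀).1 with hαdef
    set S := List.foldl (gfun G E) {G.T.start} w with hSdef
    set p := G.T.evalFrom G.T.start (flat α) with hpdef
    have hOKS : OKS G E S := okfold G E hOK w
    have hneS : G.NEStep E S c (gfun G E S c) := (gfun_spec G E hOKS c).1.1
    have hfoldwc : List.foldl (gfun G E) {G.T.start} (w ++ [c]) = gfun G E S c := by
      rw [List.foldl_append, hSdef]
      rfl
    have hsplice : ∀ m, m ≤ n₀ → G.play σA τ (w ++ [c]) m =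
        ((G.play σA τ w m).1, (G.play σA τ w m).2.1 ++ [(c, 0)],
          (G.play σA τ w m).2.2) := by
      intro m hm
      show (G.step σA τ)^[m] ([], (w ++ [c]).map (fun a => (a, 0)), 0) = _
      rw [List.map_append]
      exact stepit_splice G σA τ [] _ _ 0 m
        (fun m' hm' => hmin m' (lt_of_lt_of_le hm' hm))
    have hplayn₀ : G.play σA τ (w ++ [c]) n₀ =
        (α, [(c, 0)], (G.play σA τ w n₀).2.2) := by
      rw [hsplice n₀ le_rfl, hn₀]
      rfl
    have hevalstep : (MA G E hind).eval (α ++ [Sum.inl c]) =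
        outerT G E hind S p (Sum.inl c) := by
      rw [DFA.eval_append_singleton]
      exact obs_step G E hind hobs' _
    have hevalcall : (MA G E hind).eval (α ++ [Sum.inr c]) =
        outerT G E hind S p (Sum.inr c) := by
      rw [DFA.eval_append_singleton]
      exact obs_step G E hind hobs' _
    cases hdec : decideT G E S p c with
    | none =>
      have hread : ¬ (G.Fn c ∧ σA α c = JMove.call) := by
        rintro ⟨-, hcall⟩
        rw [hσAdef, autoStrat_call_iff] at hcall
        rw [hevalstep, outerT_inl_none G E hind hdec] at hcall
        exact mem_accept_inl G E hind _ _ hcall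
      have hstep1 : G.play σA τ (w ++ [c]) (n₀ + 1) =
          (α ++ [Sum.inl c], [], (G.play σA τ w n₀).2.2) := by
        have h1 : G.play σA τ (w ++ [c]) (n₀ + 1) =
            G.step σA τ (G.play σA τ (w ++ [c]) n₀) :=
          Function.iterate_succ_apply' _ _ _
        rw [h1, hplayn₀, step_read G hread]
      refine ⟨n₀ + 1, ?_, ?_, ?_⟩
      · rw [hstep1]
      · rw [hstep1]
        show obsT G E hind ((MA G E hind).eval (α ++ [Sum.inl c])) = _
        rw [hevalstep, outerT_inl_none G E hind hdec]
        rw [hfoldwc]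
        rw [show flat (α ++ [Sum.inl c]) = flat α ++ [c] from flat_append α [Sum.inl c]]
        rw [DFA.evalFrom_append_singleton, ← hpdef]
        rfl
      · rw [hstep1, hfoldwc]
        rw [show flat (α ++ [Sum.inl c]) = flat α ++ [c] from flat_append α [Sum.inl c]]
        rw [DFA.evalFrom_append_singleton, ← hpdef]
        exact decideT_none G E hneS hmem' hdec
    | some tt =>
      obtain ⟨t, hp1, hc1, hsub⟩ := tt
      have ind := MtT_inducing G E hind t
      rw [hp1, hc1] at ind
      obtain ⟨hterm, hfn, hstates, -⟩ := ind
      have hQA := QAT_spec G E hind t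
      rw [hp1, hc1] at hQA
      have hcall : G.Fn c ∧ σA α c = JMove.call := by
        refine ⟨hfn, ?_⟩
        rw [hσAdef, autoStrat_call_iff, hevalstep, outerT_inl_some G E hind hdec]
        exact mem_accept_flag G E hind
      set γ := α ++ [Sum.inr c] with hγdef
      set u := τ α c with hudef
      have hu : G.R c u := hτ α c hfn
      have hstep1 : G.play σA τ (w ++ [c]) (n₀ + 1) =
          (γ, u.map (fun b => (b, 1)), max (G.play σA τ w n₀).2.2 1) := by
        have h1 : G.play σA τ (w ++ [c]) (n₀ + 1) =
            G.step σA τ (G.play σA τ (w ++ [c]) n₀) :=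
          Function.iterate_succ_apply' _ _ _
        rw [h1, hplayn₀, step_call G hcall]
        rw [List.append_nil]
      have hγeval : (MA G E hind).eval γ =
          Sum.inr (Sum.inl ⟨t, (gfun G E S c, (MtT G E hind t).start)⟩) := by
        rw [hγdef, hevalcall, outerT_inr_some G E hind hdec]
      set τ' := subRStrat τ γ with hτ'def
      have hτ' : G.RValid τ' := rvalid_subRStrat G hτ γ
      set σt := autoStrat (MtT G E hind t) with hσtdef
      have hex₁ : ∃ n, (G.play σt τ' u n).2.1 = [] := hterm τ' hτ' u
      set n₁ := Nat.find hex₁ with hn₁def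
      have hn₁ : (G.play σt τ' u n₁).2.1 = [] := Nat.find_spec hex₁
      have hmin₁ : ∀ m, m < n₁ → (G.play σt τ' u m).2.1 ≠ [] :=
        fun m hm => Nat.find_min hex₁ hm
      set αf := (G.play σt τ' u n₁).1 with hαfdef
      obtain ⟨hiff, hpref⟩ := hQA.2 u hu τ' hτ' n₁ hn₁
      set qstar := G.T.evalFrom p (flat αf) with hqstardef
      have hqmem : qstar ∈ t.1.2.2 := hstates u hu ⟨τ', hτ', n₁, hn₁, hqstardef.symm⟩
      have hmstar : (MtT G E hind t).eval αf ∈ QAT G E hind t qstar :=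
        (hiff qstar hqmem).mpr hqstardef.symm
      have hexit : exitT G E hind t ((MtT G E hind t).eval αf) := ⟨qstar, hqmem, hmstar⟩
      have hnoexit : ∀ η, η <+: αf → η ≠ αf →
          ¬ exitT G E hind t ((MtT G E hind t).eval η) := by
        rintro η hpre hne ⟨q, hq, hm⟩
        exact hpref η hpre hne q hq hm
      have hhist : ∀ m, m ≤ n₁ → (G.play σt τ' u m).1 <+: αf := by
        intro m hm
        have hdecomp : G.play σt τ' u n₁ = (G.step σt τ')^[n₁ - m] (G.play σt τ' u m) := by
          show (G.step σt τ')^[n₁] ([], u.map (fun a => (a, 0)), 0) =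
            (G.step σt τ')^[n₁ - m] ((G.step σt τ')^[m] ([], u.map (fun a => (a, 0)), 0))
          rw [← Function.iterate_add_apply]
          congr 1
          omega
        rw [hαfdef, hdecomp]
        exact stepit_hist_prefix G σt τ' _ _
      have hhistproper : ∀ m, m < n₁ → (G.play σt τ' u m).1 ≠ αf := by
        intro m hm heq
        obtain ⟨x, hx⟩ := step_hist_append G σt τ' (G.play σt τ' u m) (hmin₁ m hm)
        have h0 : G.play σt τ' u (m + 1) = G.step σt τ' (G.play σt τ' u m) :=
          Function.iterate_succ_apply' _ _ _
        have h1 : (G.play σt τ' u (m + 1)).1 = (G.play σt τ' u m).1 ++ [x] := by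
          rw [h0]; exact hx
        have h2 : (G.play σt τ' u (m + 1)).1 <+: αf := hhist (m + 1) (Nat.succ_le_of_lt hm)
        have h3 := h2.length_le
        rw [h1, heq] at h3
        simp at h3
      have hagree : ∀ m, m < n₁ → ∀ a k v, (G.play σt τ' u m).2.1 = (a, k) :: v →
          σt (G.play σt τ' u m).1 a = subStrat σA γ (G.play σt τ' u m).1 a := by
        intro m hm a k v hrem
        have hβpre : (G.play σt τ' u m).1 <+: αf := hhist m (le_of_lt hm)
        have hβne : (G.play σt τ' u m).1 ≠ αf := hhistproper m hm
        set β := (G.play σt τ' u m).1 with hβdef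
        have hprefix_lemma : ∀ η, η <+: β ++ [Sum.inl a] → η ≠ β ++ [Sum.inl a] →
            ¬ exitT G E hind t ((MtT G E hind t).eval η) := by
          intro η hη hηne
          have hηβ : η <+: β := by
            have hlen : η.length ≤ β.length := by
              have hle := hη.length_le
              simp only [List.length_append, List.length_cons, List.length_nil] at hle
              rcases Nat.lt_or_ge η.length (β.length + 1) with hlt | hge
              · omega
              · exfalso
                have heq : η.length = (β ++ [Sum.inl a]).length := by simp; omega
                exact hηne (List.IsPrefix.eq_of_length hη heq)
            exact List.prefix_of_prefix_length_le hη (List.prefix_append β [Sum.inl a]) hlen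
          rcases eq_or_ne η β with heq | hηβne
          · rw [heq]; exact hnoexit β hβpre hβne
          · have hlt : η.length < β.length :=
              lt_of_le_of_ne hηβ.length_le
                (fun hl => hηβne (List.IsPrefix.eq_of_length hηβ hl))
            refine hnoexit η (hηβ.trans hβpre) (fun heq => ?_)
            have := hβpre.length_le
            rw [heq] at hlt
            omega
        have hevalx : (MA G E hind).eval (γ ++ (β ++ [Sum.inl a])) =
            Sum.inr (Sum.inl ⟨t, (gfun G E S c,
              (MtT G E hind t).eval (β ++ [Sum.inl a]))⟩) := by
          rw [show (MA G E hind).eval (γ ++ (β ++ [Sum.inl a])) =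
              (MA G E hind).evalFrom ((MA G E hind).eval γ) (β ++ [Sum.inl a]) from
            DFA.evalFrom_of_append _ _ _ _]
          rw [hγeval]
          exact eval_subroutine G E hind t _ (β ++ [Sum.inl a]) hprefix_lemma
        show σt β a = σA (γ ++ β) a
        rw [hσtdef, hσAdef]
        refine autoStrat_congr _ _ β (γ ++ β) a ?_
        rw [List.append_assoc, hevalx]
        exact Iff.rfl
      have hplayeq : G.play σt τ' u n₁ = G.play (subStrat σA γ) τ' u n₁ :=
        stepit_cong G σt (subStrat σA γ) τ' _ n₁ hagree
      have hsim := stepit_sim G σA τ γ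
        (γ, u.map (fun b => (b, 1)), max (G.play σA τ w n₀).2.2 1)
        ([], u.map (fun b => (b, 0)), 0)
        (by simp) (by simp [List.map_map, Function.comp_def]) n₁
      have hplays2 : (G.step (subStrat σA γ) (subRStrat τ γ))^[n₁]
          ([], u.map (fun b => (b, 0)), 0) = G.play σt τ' u n₁ := by
        show G.play (subStrat σA γ) τ' u n₁ = _
        exact hplayeq.symm
      rw [hplays2] at hsim
      have hstep2 : G.play σA τ (w ++ [c]) (n₀ + 1 + n₁) =
          (G.step σA τ)^[n₁] (γ, u.map (fun b => (b, 1)),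
            max (G.play σA τ w n₀).2.2 1) := by
        show (G.step σA τ)^[n₀ + 1 + n₁] _ = _
        rw [Nat.add_comm (n₀ + 1) n₁, Function.iterate_add_apply, ← hstep1]
        rfl
      have hhist2 : (G.play σA τ (w ++ [c]) (n₀ + 1 + n₁)).1 = γ ++ αf := by
        rw [hstep2]
        exact hsim.1
      have hrem2 : (G.play σA τ (w ++ [c]) (n₀ + 1 + n₁)).2.1 = [] := by
        have h2 := hsim.2
        rw [hn₁] at h2
        simp only [List.map_nil] at h2
        rw [hstep2]
        exact List.map_eq_nil_iff.mp h2
      have hevalfinal : (MA G E hind).eval (γ ++ αf) =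
          Sum.inr (Sum.inl ⟨t, (gfun G E S c, (MtT G E hind t).eval αf)⟩) := by
        rw [show (MA G E hind).eval (γ ++ αf) =
            (MA G E hind).evalFrom ((MA G E hind).eval γ) αf from
          DFA.evalFrom_of_append _ _ _ _]
        rw [hγeval]
        exact eval_subroutine G E hind t _ αf hnoexit
      have hqof : ∀ h : exitT G E hind t ((MtT G E hind t).eval αf),
          qOfT G E hind t ((MtT G E hind t).eval αf) h = qstar := by
        intro h
        obtain ⟨hm1, hm2⟩ := qOfT_spec G E hind t _ h
        exact ((hiff _ hm1).mp hm2).symm ▸ rfl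
      have hflat : G.T.evalFrom G.T.start (flat (γ ++ αf)) = qstar := by
        rw [flat_append]
        rw [show flat γ = flat α from by rw [hγdef, flat_append, flat_inr, List.append_nil]]
        rw [DFA.evalFrom_of_append, ← hpdef, ← hqstardef]
      refine ⟨n₀ + 1 + n₁, hrem2, ?_, ?_⟩
      · rw [hhist2, hfoldwc, hevalfinal, hflat]
        show (if h : exitT G E hind t ((MtT G E hind t).eval αf) then
            some (gfun G E S c, qOfT G E hind t ((MtT G E hind t).eval αf) h)
          else none) = some (gfun G E S c, qstar)
        rw [dif_pos hexit, hqof hexit]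
      · rw [hhist2, hfoldwc, hflat]
        exact hsub hqmem

end MainInvariant
theorem statement10 {A : Type} [Fintype A] [LinearOrder A] (G : CFGame A)
    (hpf : G.PrefixFree) (E : Set (G.Q × A × Set G.Q))
    (hind : ∀ t ∈ E, ¬ G.TrivialTriple t →
      ∃ (S : Type) (_ : Fintype S) (M : DFA (HSym A) S), G.Inducing M t.1 t.2.1 t.2.2) :
    ∃ (S : Type) (_ : Fintype S) (M : DFA (HSym A) S),
      ∀ ρ : List A → Set G.Q, G.NEOnlineStrat E ρ →
        slLE (G.NEWins ρ) (G.W (autoStrat M)) := by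
  classical
  by_cases hOK : OKS G E {G.T.start}
  · refine ⟨MSt G E hind, fintypeMSt G E hind, MA G E hind, ?_⟩
    intro ρ hρ
    have hρ' : OnlineFrom G E {G.T.start} ρ := ⟨hρ.1, hρ.2⟩
    have h1 : slLE (G.NEWins ρ) {w | SupM G E w {G.T.start}} :=
      NEWins_slLE_supM G E hρ'
    have h2 : {w | SupM G E w {G.T.start}} ⊆ G.W (autoStrat (MA G E hind)) := by
      intro w hw
      have hrun : List.foldl (gfun G E) {G.T.start} w ⊆ G.T.accept :=
        (supM_run G E w {G.T.start} hOK).mp hw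
      intro τ hτ
      obtain ⟨n, hrem, hobs, hmem⟩ := main_inv G E hind hOK w τ hτ
      exact ⟨n, hrem, hrun hmem⟩
    exact slLE_of_slLE_of_subset h1 h2
  · refine ⟨PUnit, inferInstance, ⟨fun _ _ => PUnit.unit, PUnit.unit, ∅⟩, ?_⟩
    intro ρ hρ
    exact absurd ⟨ρ, hρ.1, hρ.2⟩ hOK

end CFG
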